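/- Let m and n be positive integers, and let T be the number of weakly decreasing tuples (x_1 ≥ x_2 ≥ … ≥ x_n) with entries in {0,1,…,mn−1} such that x_1 + … + x_n ≡ g(m,n) (mod mn). Then n·T = ∑_{d | n} (−1)^(m(n+d)) · μ(n/d) · C((m+1)d − 1, md), where the sum is over positive divisors d of n, μ is the Möbius function, and C(·,·) is a binomial coefficient. (T is the number of orbits of the coordinate-permutation action of the symmetric group S_n on D(m,n).) -/

import Mathlib

/-- The genus of the complete multigraph `K_n^m`, namely `m·n·(n−1)/2 − n + 1`. -/
def genusZ (m n : ℕ) : ℤ := (m : ℤ) * n * ((n : ℤ) - 1) / 2 - n + 1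

open Finset Polynomial ArithmeticFunction

namespace CardOrbitsD


/-- For a primitive `e`-th root of unity, `q ^ (e(e-1)/2) = (-1)^(e-1)`. -/
lemma pow_tri {q : ℂ} {e : ℕ} (he : 0 < e) (hq : IsPrimitiveRoot q e) :
    q ^ (e * (e - 1) / 2) = (-1 : ℂ) ^ (e - 1) := by
  rcases Nat.even_or_odd e with ⟨k, hk⟩ | ⟨k, hk⟩
  · -- e = k + k
    have hk0 : 0 < k := by omega
    have h1 : e * (e - 1) / 2 = k * (e - 1) := by
      have : e * (e - 1) = 2 * (k * (e - 1)) := by rw [hk]; ring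
      omega
    have hqk : q ^ k = -1 := by
      have h2 : (q ^ k) * (q ^ k) = 1 := by
        rw [← pow_add, ← hk, hq.pow_eq_one]
      rcases mul_self_eq_one_iff.mp h2 with h | h
      · exact absurd h (hq.pow_ne_one_of_pos_of_lt hk0.ne' (by omega))
      · exact h
    rw [h1, pow_mul, hqk]
  · -- e = 2k+1
    have h1 : e * (e - 1) / 2 = e * k := by
      have : e * (e - 1) = 2 * (e * k) := by
        have : e - 1 = 2 * k := by omega
        rw [this]; ring
      omega
    have h2 : e - 1 = 2 * k := by omega
    rw [h1, pow_mul, hq.pow_eq_one, one_pow, h2, pow_mul]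
    norm_num

/-- `∏ a < e, (1 - q^a • X) = 1 - X^e` for a primitive `e`-th root of unity. -/
lemma prod_one_sub {q : ℂ} {e : ℕ} (he : 0 < e) (hq : IsPrimitiveRoot q e) :
    ∏ a ∈ range e, (1 - C (q ^ a) * X) = (1 - X ^ e : ℂ[X]) := by
  have hq0 : q ≠ 0 := hq.ne_zero he.ne'
  have hinv : IsPrimitiveRoot q⁻¹ e := hq.inv
  have key : (X ^ e - Polynomial.C (1:ℂ)) = ∏ i ∈ Finset.range e, (X - C ((q⁻¹) ^ i * 1)) :=
    X_pow_sub_C_eq_prod hinv he (one_pow e)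
  have step : ∀ a : ℕ, (1 - C (q ^ a) * X) = (-C (q ^ a)) * (X - C ((q⁻¹) ^ a * 1)) := by
    intro a
    have h : q ^ a * ((q⁻¹) ^ a * 1) = 1 := by
      rw [mul_one, ← mul_pow, mul_inv_cancel₀ hq0, one_pow]
    rw [neg_mul, mul_sub, ← C_mul, h, C_1]
    ring
  have hprodC : (∏ a ∈ range e, (-C (q ^ a))) = (-1 : ℂ[X]) := by
    have : (∏ a ∈ range e, (-C (q ^ a)))
        = (-1 : ℂ[X]) ^ e * ∏ a ∈ range e, C (q ^ a) := by
      rw [Finset.prod_congr rfl (fun a _ => show -C (q^a) = (-1 : ℂ[X]) * C (q ^ a) by ring),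
        Finset.prod_mul_distrib, Finset.prod_const, Finset.card_range]
    rw [this, ← map_prod, Finset.prod_pow_eq_pow_sum, Finset.sum_range_id,
      pow_tri he hq]
    have : (C ((-1 : ℂ) ^ (e - 1))) = ((-1 : ℂ[X]) ^ (e - 1)) := by
      rw [map_pow, map_neg, C_1]
    rw [this, ← pow_add]
    have : e + (e - 1) = 2 * (e - 1) + 1 := by omega
    rw [this, pow_succ, pow_mul]
    norm_num
  calc ∏ a ∈ range e, (1 - C (q ^ a) * X)
      = ∏ a ∈ range e, ((-C (q ^ a)) * (X - C ((q⁻¹) ^ a * 1))) :=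
        Finset.prod_congr rfl fun a _ => step a
    _ = (∏ a ∈ range e, (-C (q ^ a))) * ∏ a ∈ range e, (X - C ((q⁻¹) ^ a * 1)) :=
        Finset.prod_mul_distrib
    _ = (-1 : ℂ[X]) * (X ^ e - C 1) := by rw [hprodC, ← key]
    _ = (1 - X ^ e : ℂ[X]) := by rw [C_1]; ring

/-- `∏ i < e*M, (1 - q^i • X) = (1 - X^e)^M`. -/
lemma prod_one_sub_pow {q : ℂ} {e : ℕ} (he : 0 < e) (hq : IsPrimitiveRoot q e) (M : ℕ) :
    ∏ i ∈ range (e * M), (1 - C (q ^ i) * X) = ((1 - X ^ e : ℂ[X])) ^ M := by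
  induction M with
  | zero => simp
  | succ M ih =>
    have : e * (M + 1) = e * M + e := by ring
    rw [this, Finset.prod_range_add, ih, pow_succ]
    congr 1
    have : ∀ a ∈ range e, (1 - C (q ^ (e * M + a)) * X) = (1 - C (q ^ a) * X) := by
      intro a _
      congr 2
      rw [pow_add, pow_mul, hq.pow_eq_one, one_pow, one_mul]
    rw [Finset.prod_congr rfl this, prod_one_sub he hq]



/-- inverse of `(1 - X^e)^M` -/
noncomputable def B (e M : ℕ) : PowerSeries ℂ :=
  PowerSeries.mk fun k => if e ∣ k then ((M + k / e - 1).choose (k / e) : ℂ) else 0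

lemma B_zero (e : ℕ) : B e 0 = 1 := by
  ext k
  rw [B, PowerSeries.coeff_mk, PowerSeries.coeff_one]
  rcases Nat.eq_zero_or_pos k with rfl | hk
  · simp
  · rw [if_neg hk.ne']
    split_ifs with h
    · have hk' : 0 < k / e := Nat.div_pos (Nat.le_of_dvd hk h) (Nat.pos_of_dvd_of_pos h hk)
      rw [Nat.cast_eq_zero, Nat.choose_eq_zero_iff]
      omega
    · rfl

lemma one_sub_mul_B {e : ℕ} (he : 0 < e) (M : ℕ) :
    (1 - (PowerSeries.X : PowerSeries ℂ) ^ e) * B e (M + 1) = B e M := by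
  ext k
  rw [sub_mul, one_mul, map_sub]
  rcases Nat.lt_or_ge k e with hk | hk
  · -- coeff k (X^e * B) = 0
    have hxe : (PowerSeries.coeff k) ((PowerSeries.X : PowerSeries ℂ) ^ e * B e (M+1)) = 0 := by
      rw [PowerSeries.coeff_mul]
      apply Finset.sum_eq_zero
      rintro ⟨i, j⟩ hij
      rw [Finset.HasAntidiagonal.mem_antidiagonal] at hij
      rw [PowerSeries.coeff_X_pow]
      rw [if_neg (by omega), zero_mul]
    rw [hxe, sub_zero]
    simp only [B, PowerSeries.coeff_mk]
    split_ifs with h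
    · have : k = 0 := by
        rcases h with ⟨c, rfl⟩
        rcases Nat.eq_zero_or_pos c with rfl | hc
        · simp
        · exfalso; nlinarith [Nat.le_mul_of_pos_right e hc]
      subst this
      simp
    · rfl
  · -- k = d + e
    obtain ⟨d, rfl⟩ : ∃ d, k = d + e := ⟨k - e, by omega⟩
    rw [PowerSeries.coeff_X_pow_mul]
    simp only [B, PowerSeries.coeff_mk]
    have hdvd : e ∣ d + e ↔ e ∣ d := by
      constructor
      · intro h
        have := Nat.dvd_sub h (dvd_refl e)
        simpa using this
      · intro h; exact Dvd.dvd.add h (dvd_refl e)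
    split_ifs with h1 h2 h2
    · -- e ∣ d + e and e ∣ d
      obtain ⟨j, rfl⟩ := h2
      have hde : (e * j + e) / e = j + 1 := by
        rw [← Nat.mul_succ, Nat.mul_div_cancel_left _ he]
      have hde2 : e * j / e = j := Nat.mul_div_cancel_left _ he
      rw [hde, hde2]
      have h3 : M + 1 + (j + 1) - 1 = M + j + 1 := by omega
      have h4 : M + 1 + j - 1 = M + j := by omega
      have h5 : M + (j + 1) - 1 = M + j := by omega
      rw [h3, h4, h5, Nat.choose_succ_succ' (M + j) j]
      push_cast
      ring
    · exact absurd (hdvd.mp h1) h2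
    · exact absurd (hdvd.mpr h2) h1
    · simp




lemma one_sub_pow_mul_B {e : ℕ} (he : 0 < e) (M : ℕ) :
    (1 - (PowerSeries.X : PowerSeries ℂ) ^ e) ^ M * B e M = 1 := by
  induction M with
  | zero => simpa using B_zero e
  | succ M ih =>
    calc (1 - (PowerSeries.X : PowerSeries ℂ) ^ e) ^ (M+1) * B e (M+1)
        = (1 - (PowerSeries.X : PowerSeries ℂ) ^ e) ^ M
            * ((1 - (PowerSeries.X : PowerSeries ℂ) ^ e) * B e (M+1)) := by ring
      _ = 1 := by rw [one_sub_mul_B he M]; exact ih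

noncomputable def F (q : ℂ) (i : ℕ) : PowerSeries ℂ := PowerSeries.mk fun k => q ^ (i * k)

lemma one_sub_mul_F (q : ℂ) (i : ℕ) :
    (1 - PowerSeries.C (q ^ i) * PowerSeries.X) * F q i = 1 := by
  ext k
  rw [sub_mul, one_mul, map_sub, mul_assoc]
  cases k with
  | zero =>
    simp [F, PowerSeries.constantCoeff_mk, map_mul]
  | succ k =>
    rw [PowerSeries.coeff_C_mul, PowerSeries.coeff_succ_X_mul]
    simp only [F, PowerSeries.coeff_mk, PowerSeries.coeff_one, Nat.succ_ne_zero, if_false]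
    rw [← pow_add, sub_eq_zero]
    congr 1
    ring

/-- Key evaluation: the generating sum of `q^(weighted sum)` over count vectors. -/
lemma eval_sum {q : ℂ} {e : ℕ} (he : 0 < e) (hq : IsPrimitiveRoot q e) (M n : ℕ) :
    ∑ l ∈ (range (e * M)).finsuppAntidiag n, q ^ (∑ i ∈ range (e * M), i * (l i))
      = if e ∣ n then ((M + n / e - 1).choose (n / e) : ℂ) else 0 := by
  have h2 : ∑ l ∈ (range (e * M)).finsuppAntidiag n, q ^ (∑ i ∈ range (e * M), i * (l i))
      = PowerSeries.coeff n (∏ i ∈ range (e * M), F q i) := by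
    rw [PowerSeries.coeff_prod]
    refine sum_congr rfl fun l _ => ?_
    rw [← Finset.prod_pow_eq_pow_sum]
    exact prod_congr rfl fun i _ => by rw [F, PowerSeries.coeff_mk]
  have hpoly : ∏ i ∈ range (e * M), (1 - PowerSeries.C (q ^ i) * PowerSeries.X)
      = (1 - PowerSeries.X ^ e : PowerSeries ℂ) ^ M := by
    have h := congrArg (Polynomial.coeToPowerSeries.ringHom (R := ℂ)) (prod_one_sub_pow he hq M)
    rw [map_prod, map_pow, map_sub, map_one, map_pow] at h
    simp only [Polynomial.coeToPowerSeries.ringHom_apply, Polynomial.coe_X] at h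
    rw [← h]
    refine prod_congr rfl fun i _ => ?_
    rw [Polynomial.coe_sub, Polynomial.coe_one, Polynomial.coe_mul, Polynomial.coe_C,
      Polynomial.coe_X]
  have hu : ((1 - PowerSeries.X ^ e : PowerSeries ℂ) ^ M) * ∏ i ∈ range (e * M), F q i = 1 := by
    rw [← hpoly, ← Finset.prod_mul_distrib, Finset.prod_congr rfl (fun i _ => one_sub_mul_F q i)]
    exact Finset.prod_const_one
  have hFB : ∏ i ∈ range (e * M), F q i = B e M := by
    calc ∏ i ∈ range (e * M), F q i
        = (((1 - PowerSeries.X ^ e : PowerSeries ℂ) ^ M) * B e M) * ∏ i ∈ range (e * M), F q i := by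
          rw [one_sub_pow_mul_B he M, one_mul]
      _ = (((1 - PowerSeries.X ^ e : PowerSeries ℂ) ^ M) * ∏ i ∈ range (e * M), F q i) * B e M := by
          ring
      _ = B e M := by rw [hu, one_mul]
  rw [h2, hFB, B, PowerSeries.coeff_mk]



/-- Root of unity orthogonality. -/
lemma orth {z : ℂ} {N : ℕ} (hN : 0 < N) (hz : IsPrimitiveRoot z N) (k : ℤ) :
    ∑ j ∈ range N, z ^ ((j : ℤ) * k) = if ((N : ℤ) ∣ k) then (N : ℂ) else 0 := by
  have hrw : ∀ j ∈ range N, z ^ ((j : ℤ) * k) = (z ^ k) ^ j := by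
    intro j _
    rw [mul_comm, zpow_mul, zpow_natCast]
  rw [Finset.sum_congr rfl hrw]
  by_cases h : (N : ℤ) ∣ k
  · rw [if_pos h, (hz.zpow_eq_one_iff_dvd k).mpr h]
    simp
  · have hne : z ^ k ≠ 1 := fun hh => h ((hz.zpow_eq_one_iff_dvd k).mp hh)
    rw [if_neg h, geom_sum_eq hne]
    have hNone : (z ^ k) ^ N = 1 := by
      rw [← zpow_natCast, ← zpow_mul, mul_comm, zpow_mul, zpow_natCast, hz.pow_eq_one, one_zpow]
    rw [hNone, sub_self, zero_div]

/-- `∑_{d | K} μ d = [K = 1]`. -/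
lemma sum_moebius_divisors (K : ℕ) :
    ∑ d ∈ K.divisors, ArithmeticFunction.moebius d = if K = 1 then 1 else 0 := by
  have h := congrFun (congrArg (fun f : ArithmeticFunction ℤ => (f : ℕ → ℤ)) moebius_mul_coe_zeta) K
  simp only [coe_mul_zeta_apply] at h
  rw [h, ArithmeticFunction.one_apply]

/-- Interval Möbius δ: for `e ∣ f`, `0 < f`,
`∑_{e' : e ∣ e' ∣ f} μ (f / e') = [f = e]`. -/
lemma sum_moebius_interval {e f : ℕ} (he : 0 < e) (hf : 0 < f) (hef : e ∣ f) :
    ∑ e' ∈ f.divisors.filter (e ∣ ·), moebius (f / e') = if f = e then 1 else 0 := by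
  obtain ⟨K, rfl⟩ := hef
  have hK : 0 < K := Nat.pos_of_ne_zero fun h => by simp [h] at hf
  have hbij : ∑ e' ∈ (e * K).divisors.filter (e ∣ ·), moebius ((e * K) / e')
      = ∑ s ∈ K.divisors, moebius (K / s) := by
    refine Finset.sum_nbij' (fun e' => e' / e) (fun s => e * s) ?_ ?_ ?_ ?_ ?_
    · intro e' he'
      simp only [Finset.mem_filter, Nat.mem_divisors] at he'
      obtain ⟨⟨hd, hne⟩, ⟨s, rfl⟩⟩ := he'
      rw [Nat.mul_div_cancel_left _ he, Nat.mem_divisors]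
      exact ⟨(mul_dvd_mul_iff_left he.ne').mp hd, hK.ne'⟩
    · intro s hs
      simp only [Nat.mem_divisors] at hs
      simp only [Finset.mem_filter, Nat.mem_divisors]
      exact ⟨⟨mul_dvd_mul_left e hs.1, by positivity⟩, Dvd.intro s rfl⟩
    · intro e' he'
      simp only [Finset.mem_filter, Nat.mem_divisors] at he'
      obtain ⟨_, ⟨s, rfl⟩⟩ := he'
      rw [Nat.mul_div_cancel_left _ he]
    · intro s hs
      rw [Nat.mul_div_cancel_left _ he]
    · intro e' he'
      simp only [Finset.mem_filter, Nat.mem_divisors] at he'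
      obtain ⟨_, ⟨s, rfl⟩⟩ := he'
      rw [Nat.mul_div_cancel_left _ he, Nat.mul_div_mul_left _ _ he]
  rw [hbij]
  have h2 : ∑ s ∈ K.divisors, moebius (K / s) = ∑ s ∈ K.divisors, moebius s :=
    Nat.sum_div_divisors K moebius
  rw [h2, sum_moebius_divisors]
  congr 1
  rw [eq_iff_iff]
  constructor <;> intro h
  · subst h; rw [Nat.mul_one]
  · have : e * K = e * 1 := by omega
    exact Nat.eq_of_mul_eq_mul_left he this



lemma count_card (N : ℕ) (s : Multiset ℕ) (hs : ∀ a ∈ s, a < N) :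
    ∑ i ∈ Finset.range N, s.count i = Multiset.card s := by
  induction s using Multiset.induction_on with
  | empty => simp
  | cons a s ih =>
    have ha : a < N := hs a (Multiset.mem_cons_self a s)
    have hs' : ∀ b ∈ s, b < N := fun b hb => hs b (Multiset.mem_cons_of_mem hb)
    simp only [Multiset.count_cons, Multiset.card_cons]
    rw [Finset.sum_add_distrib, ih hs', Finset.sum_ite_eq' (Finset.range N) a (fun _ => 1),
      if_pos (Finset.mem_range.mpr ha)]

lemma count_weight (N : ℕ) (s : Multiset ℕ) (hs : ∀ a ∈ s, a < N) :
    ∑ i ∈ Finset.range N, i * s.count i = s.sum := by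
  induction s using Multiset.induction_on with
  | empty => simp
  | cons a s ih =>
    have ha : a < N := hs a (Multiset.mem_cons_self a s)
    have hs' : ∀ b ∈ s, b < N := fun b hb => hs b (Multiset.mem_cons_of_mem hb)
    simp only [Multiset.count_cons, Multiset.sum_cons, Nat.mul_add]
    rw [Finset.sum_add_distrib, ih hs']
    have h2 : ∑ i ∈ Finset.range N, i * (if i = a then 1 else 0) = a := by
      rw [Finset.sum_congr rfl (fun i _ => by rw [mul_ite, mul_one, mul_zero]),
        Finset.sum_ite_eq' (Finset.range N) a (fun i => i), if_pos (Finset.mem_range.mpr ha)]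
    omega

/-- The multiset of values of a tuple. -/
def msOf {n N : ℕ} (x : Fin n → Fin N) : Multiset ℕ := ↑(List.ofFn fun i => (x i : ℕ))

lemma msOf_lt {n N : ℕ} (x : Fin n → Fin N) : ∀ a ∈ msOf x, a < N := by
  intro a ha
  rw [msOf, Multiset.mem_coe, List.mem_ofFn] at ha
  obtain ⟨i, rfl⟩ := ha
  exact (x i).isLt

lemma msOf_card {n N : ℕ} (x : Fin n → Fin N) : Multiset.card (msOf x) = n := by
  rw [msOf, Multiset.coe_card, List.length_ofFn]

lemma msOf_sum {n N : ℕ} (x : Fin n → Fin N) : (msOf x).sum = ∑ i, (x i : ℕ) := by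
  rw [msOf, Multiset.sum_coe, List.sum_ofFn]


lemma ofFn_getD_reverse (L : List ℕ) (n : ℕ) (hlen : L.length = n) :
    (List.ofFn fun i : Fin n => L.getD (n - 1 - (i : ℕ)) 0) = L.reverse := by
  subst hlen
  refine List.ext_get ?_ ?_
  · simp
  · intro k h1 h2
    rw [List.length_ofFn] at h1
    have hidx : L.length - 1 - k < L.length := by omega
    rw [List.get_ofFn]
    show L.getD (L.length - 1 - k) 0 = L.reverse.get ⟨k, h2⟩
    have hrev : L.reverse.get ⟨k, h2⟩ = L[L.length - 1 - k]'hidx := by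
      rw [List.get_eq_getElem]
      exact List.getElem_reverse _
    rw [hrev, List.getD_eq_getElem L 0 hidx]

/-- The bridge. -/
lemma bridge (n N : ℕ) (g : ℤ) :
    ((Finset.univ : Finset (Fin n → Fin N)).filter fun x =>
        (∀ i j : Fin n, i ≤ j → x j ≤ x i) ∧
        (∑ i, ((x i : ℕ) : ℤ)) ≡ g [ZMOD (N : ℤ)]).card
      = (((Finset.range N).finsuppAntidiag n).filter fun l =>
          (∑ i ∈ Finset.range N, (i : ℤ) * (l i : ℤ)) ≡ g [ZMOD (N : ℤ)]).card := by
  haveI : IsAntisymm ℕ (fun a b : ℕ => b ≤ a) := ⟨fun a b h1 h2 => le_antisymm h2 h1⟩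
  refine Finset.card_bij (fun x _ => Multiset.toFinsupp (msOf x)) ?_ ?_ ?_
  · -- membership
    rintro x hx
    rw [Finset.mem_filter] at hx
    obtain ⟨-, -, hcong⟩ := hx
    have hsupp : (Multiset.toFinsupp (msOf x)).support ⊆ Finset.range N := by
      intro a ha
      rw [Multiset.toFinsupp_support, Multiset.mem_toFinset] at ha
      exact Finset.mem_range.mpr (msOf_lt x a ha)
    rw [Finset.mem_filter, Finset.mem_finsuppAntidiag]
    refine ⟨⟨?_, hsupp⟩, ?_⟩
    · have h1 : (Finset.range N).sum ⇑(Multiset.toFinsupp (msOf x))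
          = ∑ i ∈ Finset.range N, (msOf x).count i :=
        Finset.sum_congr rfl (fun i _ => Multiset.toFinsupp_apply (msOf x) i)
      rw [h1, count_card N (msOf x) (msOf_lt x), msOf_card]
    · have hw : ∑ i ∈ Finset.range N, (i : ℤ) * ((Multiset.toFinsupp (msOf x)) i : ℤ)
          = ((msOf x).sum : ℤ) := by
        rw [← count_weight N (msOf x) (msOf_lt x)]
        push_cast
        exact Finset.sum_congr rfl fun i _ => by rw [Multiset.toFinsupp_apply]
      rw [hw, msOf_sum]
      have h2 : ((∑ i, (x i : ℕ) : ℕ) : ℤ) = ∑ i, ((x i : ℕ) : ℤ) := by push_cast; rfl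
      rw [h2]
      exact hcong
  · -- injectivity
    rintro x hx y hy hxy
    rw [Finset.mem_filter] at hx hy
    obtain ⟨-, hxa, -⟩ := hx
    obtain ⟨-, hya, -⟩ := hy
    have hms : msOf x = msOf y := by
      have h := congrArg Finsupp.toMultiset hxy
      rwa [Multiset.toFinsupp_toMultiset, Multiset.toFinsupp_toMultiset] at h
    have hperm : (List.ofFn fun i => (x i : ℕ)).Perm (List.ofFn fun i => (y i : ℕ)) :=
      Multiset.coe_eq_coe.mp hms
    have hsx : List.Pairwise (fun a b : ℕ => b ≤ a) (List.ofFn fun i => (x i : ℕ)) := by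
      rw [List.pairwise_ofFn]
      exact fun i j hij => hxa i j hij.le
    have hsy : List.Pairwise (fun a b : ℕ => b ≤ a) (List.ofFn fun i => (y i : ℕ)) := by
      rw [List.pairwise_ofFn]
      exact fun i j hij => hya i j hij.le
    have hlist := hperm.eq_of_pairwise' hsx hsy
    have hfun := List.ofFn_injective hlist
    funext i
    exact Fin.ext (congrFun hfun i)
  · -- surjectivity
    rintro l hl
    rw [Finset.mem_filter, Finset.mem_finsuppAntidiag] at hl
    obtain ⟨⟨hsum, hsupp⟩, hcong⟩ := hl
    set s : Multiset ℕ := Finsupp.toMultiset l with hs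
    have hslt : ∀ a ∈ s, a < N := by
      intro a ha
      rw [hs, Finsupp.mem_toMultiset] at ha
      exact Finset.mem_range.mp (hsupp ha)
    have hcard : Multiset.card s = n := by
      rw [hs, Finsupp.card_toMultiset,
        Finsupp.sum_of_support_subset l hsupp _ (fun _ _ => rfl)]
      exact hsum
    set L := Multiset.sort s (· ≤ ·) with hL
    have hlen : L.length = n := by rw [hL, Multiset.length_sort, hcard]
    have hmemL : ∀ a ∈ L, a < N := fun a ha => hslt a ((Multiset.mem_sort _).mp ha)
    have hsorted : List.Pairwise (· ≤ ·) L := Multiset.pairwise_sort s _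
    have hyl : ∀ i : Fin n, L.getD (n - 1 - (i : ℕ)) 0 < N := by
      intro i
      have hidx : n - 1 - (i : ℕ) < L.length := by
        have := i.isLt
        omega
      rw [List.getD_eq_getElem L 0 hidx]
      exact hmemL _ (List.getElem_mem _)
    set x : Fin n → Fin N := fun i => (⟨L.getD (n - 1 - (i : ℕ)) 0, hyl i⟩ : Fin N) with hxdef
    have hofn : (List.ofFn fun i : Fin n => ((x i : Fin N) : ℕ)) = L.reverse := by
      have heq : (fun i : Fin n => ((x i : Fin N) : ℕ))
          = fun i : Fin n => L.getD (n - 1 - (i : ℕ)) 0 := rfl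
      rw [heq]
      exact ofFn_getD_reverse L n hlen
    have hmsx : msOf x = s := by
      rw [msOf, hofn, Multiset.coe_reverse, hL, Multiset.sort_eq]
    have hsum_nat : (∑ i, ((x i : Fin N) : ℕ)) = s.sum := by
      rw [← msOf_sum x, hmsx]
    refine ⟨x, ?_, ?_⟩
    · rw [Finset.mem_filter]
      refine ⟨Finset.mem_univ _, ?_, ?_⟩
      · intro i j hij
        show ((x j : Fin N)) ≤ ((x i : Fin N))
        rw [hxdef]
        show (L.getD (n - 1 - (j : ℕ)) 0) ≤ (L.getD (n - 1 - (i : ℕ)) 0)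
        have hj : n - 1 - (j : ℕ) < L.length := by have := j.isLt; omega
        have hi : n - 1 - (i : ℕ) < L.length := by have := i.isLt; omega
        rw [List.getD_eq_getElem L 0 hj, List.getD_eq_getElem L 0 hi]
        rcases Nat.lt_or_ge (n - 1 - (j : ℕ)) (n - 1 - (i : ℕ)) with h | h
        · have hpg := List.pairwise_iff_get.mp hsorted ⟨n - 1 - (j : ℕ), hj⟩
            ⟨n - 1 - (i : ℕ), hi⟩ h
          simpa using hpg
        · have hij' : (i : ℕ) ≤ (j : ℕ) := hij
          have heq2 : n - 1 - (j : ℕ) = n - 1 - (i : ℕ) := by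
            have := i.isLt; have := j.isLt; omega
          have : L[n - 1 - (j : ℕ)]'hj = L[n - 1 - (i : ℕ)]'hi := by
            congr 1
          exact le_of_eq this
      · -- sum condition
        have hw : ((s.sum : ℕ) : ℤ) = ∑ i ∈ Finset.range N, (i : ℤ) * (l i : ℤ) := by
          rw [← count_weight N s hslt]
          push_cast
          refine Finset.sum_congr rfl fun i _ => ?_
          rw [hs, ← Multiset.toFinsupp_apply, Finsupp.toMultiset_toFinsupp]
        have : (∑ i, ((x i : ℕ) : ℤ)) = ((s.sum : ℕ) : ℤ) := by
          rw [← hsum_nat]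
          push_cast
          rfl
        rw [this, hw]
        exact hcong
    · show Multiset.toFinsupp (msOf x) = l
      rw [hmsx, hs, Finsupp.toMultiset_toFinsupp]



/-- Möbius inversion over the divisor interval. -/
lemma moebius_inv (n e : ℕ) (hn : 0 < n) (he : 0 < e) (hen : e ∣ n) (F : ℕ → ℤ) :
    ∑ e' ∈ n.divisors.filter (e ∣ ·),
        ∑ f ∈ n.divisors.filter (e' ∣ ·), moebius (f / e') * F f = F e := by
  have step1 : ∀ e' ∈ n.divisors,
      ∑ f ∈ n.divisors.filter (e' ∣ ·), moebius (f / e') * F f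
        = ∑ f ∈ n.divisors, if e' ∣ f then moebius (f / e') * F f else 0 := by
    intro e' _
    rw [Finset.sum_filter]
  have step2 : ∑ e' ∈ n.divisors.filter (e ∣ ·),
      ∑ f ∈ n.divisors.filter (e' ∣ ·), moebius (f / e') * F f
      = ∑ e' ∈ n.divisors, ∑ f ∈ n.divisors,
          if e ∣ e' ∧ e' ∣ f then moebius (f / e') * F f else 0 := by
    rw [Finset.sum_filter]
    refine Finset.sum_congr rfl fun e' he' => ?_
    split_ifs with h
    · rw [step1 e' he']
      refine Finset.sum_congr rfl fun f _ => ?_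
      simp [h]
    · refine (Finset.sum_eq_zero fun f _ => ?_).symm
      simp [h]
  rw [step2, Finset.sum_comm]
  have step3 : ∀ f ∈ n.divisors,
      ∑ e' ∈ n.divisors, (if e ∣ e' ∧ e' ∣ f then moebius (f / e') * F f else 0)
        = (if f = e then 1 else 0) * F f := by
    intro f hf
    rw [Nat.mem_divisors] at hf
    have hf0 : 0 < f := Nat.pos_of_dvd_of_pos hf.1 hn
    have hsub : f.divisors ⊆ n.divisors := Nat.divisors_subset_of_dvd hf.2 hf.1
    rw [← Finset.sum_subset hsub (fun e' h1 h2 => by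
      rw [if_neg]
      rintro ⟨-, hdvd⟩
      exact h2 (Nat.mem_divisors.mpr ⟨hdvd, hf0.ne'⟩))]
    have : ∀ e' ∈ f.divisors, (if e ∣ e' ∧ e' ∣ f then moebius (f / e') * F f else 0)
        = (if e ∣ e' then moebius (f / e') else 0) * F f := by
      intro e' he'
      rw [Nat.mem_divisors] at he'
      by_cases h : e ∣ e'
      · rw [if_pos ⟨h, he'.1⟩, if_pos h]
      · rw [if_neg (fun hh => h hh.1), if_neg h, zero_mul]
    rw [Finset.sum_congr rfl this, ← Finset.sum_mul, ← Finset.sum_filter]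
    by_cases hef : e ∣ f
    · rw [sum_moebius_interval he hf0 hef]
    · have hempty : f.divisors.filter (e ∣ ·) = ∅ := by
        rw [Finset.filter_eq_empty_iff]
        intro e' he'
        rw [Nat.mem_divisors] at he'
        exact fun hh => hef (hh.trans he'.1)
      rw [hempty]
      have : ¬ (f = e) := fun h => hef (h ▸ dvd_refl f)
      rw [if_neg this]
      simp
  rw [Finset.sum_congr rfl step3]
  have : ∀ f ∈ n.divisors, (if f = e then 1 else 0) * F f = if f = e then F f else 0 := by
    intro f _
    split_ifs <;> simp
  rw [Finset.sum_congr rfl this, Finset.sum_ite_eq' n.divisors e F,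
    if_pos (Nat.mem_divisors.mpr ⟨hen, hn.ne'⟩)]

/-- The divisibility condition rewrite. -/
lemma dvd_cond_iff {n N j e' : ℕ} (hN : 0 < N) (hnN : n ∣ N) (he' : e' ∣ n) :
    (N / e') ∣ j ↔ (N / Nat.gcd j N) ∣ e' := by
  have he'N : e' ∣ N := he'.trans hnN
  have he'0 : 0 < e' := Nat.pos_of_dvd_of_pos he' (Nat.pos_of_dvd_of_pos hnN hN)
  set c := Nat.gcd j N with hc
  have hc0 : 0 < c := Nat.gcd_pos_of_pos_right j hN
  have hcj : c ∣ j := Nat.gcd_dvd_left j N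
  have hcN : c ∣ N := Nat.gcd_dvd_right j N
  set e := N / c with he
  set u := j / c with hu
  have hNce : N = c * e := (Nat.mul_div_cancel' hcN).symm
  have hjcu : j = c * u := (Nat.mul_div_cancel' hcj).symm
  have hcop : Nat.Coprime u e := by
    rw [hu, he, hc]
    exact Nat.coprime_div_gcd_div_gcd hc0
  rw [Nat.div_dvd_iff_dvd_mul he'N (by omega)]
  constructor
  · intro h
    -- N ∣ e' * j  ⇒  e ∣ e'
    rw [hNce, hjcu] at h
    have h2 : c * e ∣ c * (e' * u) := by
      calc c * e ∣ e' * (c * u) := h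
        _ = c * (e' * u) := by ring
    have h3 : e ∣ e' * u := (mul_dvd_mul_iff_left hc0.ne').mp h2
    exact Nat.Coprime.dvd_of_dvd_mul_right hcop.symm h3
  · intro h
    rw [hNce]
    calc c * e ∣ c * e' := mul_dvd_mul_left c h
      _ ∣ e' * j := by
          rw [mul_comm]
          exact mul_dvd_mul_left e' hcj



lemma eval_sum' {q : ℂ} {e M N : ℕ} (he : 0 < e) (hq : IsPrimitiveRoot q e)
    (hNe : N = e * M) (n : ℕ) :
    ∑ l ∈ (range N).finsuppAntidiag n, q ^ (∑ i ∈ range N, i * (l i))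
      = if e ∣ n then ((M + n / e - 1).choose (n / e) : ℂ) else 0 := by
  subst hNe
  exact eval_sum he hq M n

lemma inner_j {z : ℂ} {N e' : ℕ} (hN : 0 < N) (hz : IsPrimitiveRoot z N) (he'N : e' ∣ N)
    (he'0 : 0 < e') (g : ℤ) :
    ∑ j ∈ (range N).filter ((N / e') ∣ ·), z ^ ((j : ℤ) * (-g))
      = if (e' : ℤ) ∣ g then (e' : ℂ) else 0 := by
  set K := N / e' with hK
  have hKe' : K * e' = N := Nat.div_mul_cancel he'N
  have hK0 : 0 < K := by
    rcases Nat.eq_zero_or_pos K with h | h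
    · rw [h, zero_mul] at hKe'; omega
    · exact h
  have hzK : IsPrimitiveRoot (z ^ K) e' := hz.pow hN hKe'.symm
  have hbij : ∑ j ∈ (range N).filter (K ∣ ·), z ^ ((j : ℤ) * (-g))
      = ∑ t ∈ range e', (z ^ K) ^ ((t : ℤ) * (-g)) := by
    refine Finset.sum_nbij' (fun j => j / K) (fun t => K * t) ?_ ?_ ?_ ?_ ?_
    · intro j hj
      simp only [mem_filter, mem_range] at hj
      obtain ⟨hjN, t, rfl⟩ := hj
      simp only [mem_range]
      rw [Nat.mul_div_cancel_left _ hK0]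
      by_contra hcon
      push_neg at hcon
      have : K * e' ≤ K * t := Nat.mul_le_mul_left K hcon
      omega
    · intro t ht
      simp only [mem_range] at ht
      simp only [mem_filter, mem_range]
      exact ⟨by calc K * t < K * e' := by exact (Nat.mul_lt_mul_left hK0).mpr ht
             _ = N := hKe', Dvd.intro t rfl⟩
    · intro j hj
      simp only [mem_filter, mem_range] at hj
      obtain ⟨hjN, t, rfl⟩ := hj
      rw [Nat.mul_div_cancel_left _ hK0]
    · intro t _
      rw [Nat.mul_div_cancel_left _ hK0]
    · intro j hj
      simp only [mem_filter, mem_range] at hj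
      obtain ⟨hjN, t, rfl⟩ := hj
      rw [Nat.mul_div_cancel_left _ hK0]
      rw [← zpow_natCast z K, ← zpow_mul]
      congr 1
      push_cast
      ring
  rw [hbij, orth he'0 hzK (-g)]
  exact if_congr (dvd_neg) rfl rfl

/-- The central identity, integer form. -/
lemma int_step (n N : ℕ) (hn : 0 < n) (hN : 0 < N) (hnN : n ∣ N) (g : ℤ) :
    (N : ℤ) * ((((range N).finsuppAntidiag n).filter fun l =>
        (∑ i ∈ range N, (i : ℤ) * (l i : ℤ)) ≡ g [ZMOD (N : ℤ)]).card : ℤ)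
    = ∑ e' ∈ n.divisors,
        (∑ f ∈ n.divisors.filter (e' ∣ ·),
          moebius (f / e') * ((N / f + n / f - 1).choose (n / f) : ℤ))
          * (if (e' : ℤ) ∣ g then (e' : ℤ) else 0) := by
  obtain ⟨z, hz⟩ : ∃ z : ℂ, IsPrimitiveRoot z N :=
    ⟨Complex.exp (2 * Real.pi * Complex.I / N), Complex.isPrimitiveRoot_exp N hN.ne'⟩
  have hz0 : z ≠ 0 := fun h => by
    have := hz.pow_eq_one
    rw [h, zero_pow hN.ne'] at this
    exact zero_ne_one this
  set Ball := (range N).finsuppAntidiag n with hBall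
  set W : (ℕ →₀ ℕ) → ℕ := fun l => ∑ i ∈ range N, i * l i with hW
  set Gz : ℕ → ℤ := fun e' => ∑ f ∈ n.divisors.filter (e' ∣ ·),
      moebius (f / e') * ((N / f + n / f - 1).choose (n / f) : ℤ) with hGz
  -- Step A : complex LHS
  have stepA : ∑ l ∈ Ball, (if ((N : ℤ) ∣ ((W l : ℤ) - g)) then (N : ℂ) else 0)
      = (N : ℂ) * ((Ball.filter fun l =>
          (∑ i ∈ range N, (i : ℤ) * (l i : ℤ)) ≡ g [ZMOD (N : ℤ)]).card : ℂ) := by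
    have hcond : ∀ l ∈ Ball, (((N : ℤ) ∣ ((W l : ℤ) - g)) ↔
        ((∑ i ∈ range N, (i : ℤ) * (l i : ℤ)) ≡ g [ZMOD (N : ℤ)])) := by
      intro l _
      rw [Int.modEq_iff_dvd]
      constructor
      · intro h
        have h2 : (W l : ℤ) = ∑ i ∈ range N, (i : ℤ) * (l i : ℤ) := by
          rw [hW]; push_cast; rfl
        rw [← h2]
        exact (dvd_sub_comm).mp h
      · intro h
        have h2 : (W l : ℤ) = ∑ i ∈ range N, (i : ℤ) * (l i : ℤ) := by
          rw [hW]; push_cast; rfl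
        rw [h2]
        exact (dvd_sub_comm).mp h
    rw [Finset.sum_congr rfl (fun l hl => by rw [if_congr (hcond l hl) rfl rfl])]
    rw [← Finset.sum_filter]
    rw [Finset.sum_const, nsmul_eq_mul, mul_comm]
  -- Step B : orthogonality per l
  have stepB : ∀ l ∈ Ball, (if ((N : ℤ) ∣ ((W l : ℤ) - g)) then (N : ℂ) else 0)
      = ∑ j ∈ range N, z ^ ((j : ℤ) * ((W l : ℤ) - g)) := by
    intro l _
    rw [orth hN hz]
  -- Step C+D+E : per-j evaluation
  have stepCDE : ∀ j ∈ range N,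
      ∑ l ∈ Ball, z ^ ((j : ℤ) * ((W l : ℤ) - g))
        = ∑ e' ∈ n.divisors.filter (fun e' => (N / e') ∣ j),
            z ^ ((j : ℤ) * (-g)) * (Gz e' : ℂ) := by
    intro j hj
    -- split the exponent
    have hsplit : ∀ l, z ^ ((j : ℤ) * ((W l : ℤ) - g))
        = z ^ ((j : ℤ) * (-g)) * (z ^ j) ^ (W l) := by
      intro l
      rw [← zpow_natCast (z ^ j) (W l), ← zpow_natCast z j, ← zpow_mul,
        ← zpow_add₀ hz0]
      congr 1
      ring
    rw [Finset.sum_congr rfl (fun l _ => hsplit l), ← Finset.mul_sum]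
    -- evaluate inner sum
    set c := Nat.gcd j N with hc
    have hc0 : 0 < c := Nat.gcd_pos_of_pos_right j hN
    have hcN : c ∣ N := Nat.gcd_dvd_right j N
    set e := N / c with he
    have hNe : N = e * c := by
      rw [he, Nat.div_mul_cancel hcN]
    have he0 : 0 < e := by
      rcases Nat.eq_zero_or_pos e with h | h
      · rw [h, zero_mul] at hNe; omega
      · exact h
    have hprim : IsPrimitiveRoot (z ^ j) e := by
      have hcj : c ∣ j := Nat.gcd_dvd_left j N
      have hjcu : j = c * (j / c) := (Nat.mul_div_cancel' hcj).symm
      have hcop : Nat.Coprime (j / c) e := by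
        rw [he, hc]
        exact Nat.coprime_div_gcd_div_gcd hc0
      have hbase : IsPrimitiveRoot (z ^ c) e := hz.pow hN (hNe.trans (Nat.mul_comm e c))
      rw [hjcu, pow_mul]
      exact hbase.pow_of_coprime _ hcop
    have hinner : ∑ l ∈ Ball, (z ^ j) ^ (W l)
        = if e ∣ n then (((c + n / e - 1).choose (n / e) : ℕ) : ℂ) else 0 := by
      rw [hBall, hW]
      exact eval_sum' he0 hprim hNe n
    rw [hinner]
    -- step E : Möbius expansion of the ite
    have hE : (if e ∣ n then (((c + n / e - 1).choose (n / e) : ℕ) : ℂ) else 0)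
        = ∑ e' ∈ n.divisors.filter (fun e' => (N / e') ∣ j), (Gz e' : ℂ) := by
      have hfiltereq : n.divisors.filter (fun e' => (N / e') ∣ j)
          = n.divisors.filter (fun e' => e ∣ e') := by
        refine Finset.filter_congr fun e' he' => ?_
        rw [Nat.mem_divisors] at he'
        rw [dvd_cond_iff hN hnN he'.1, ← hc, ← he]
      rw [hfiltereq]
      by_cases hen : e ∣ n
      · rw [if_pos hen]
        have hNc : N / e = c := by rw [hNe, Nat.mul_div_cancel_left _ he0]
        have hF : ∑ e' ∈ n.divisors.filter (fun e' => e ∣ e'), Gz e'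
            = ((c + n / e - 1).choose (n / e) : ℤ) := by
          have h2 := moebius_inv n e hn he0 hen
            (fun f => ((N / f + n / f - 1).choose (n / f) : ℤ))
          rw [← hNc]
          exact h2
        calc (((c + n / e - 1).choose (n / e) : ℕ) : ℂ)
            = ((((c + n / e - 1).choose (n / e) : ℤ)) : ℂ) := by push_cast; rfl
          _ = ((∑ e' ∈ n.divisors.filter (fun e' => e ∣ e'), Gz e' : ℤ) : ℂ) := by rw [hF]
          _ = ∑ e' ∈ n.divisors.filter (fun e' => e ∣ e'), ((Gz e' : ℤ) : ℂ) := by push_cast; rfl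
      · rw [if_neg hen]
        have hempty : n.divisors.filter (fun e' => e ∣ e') = ∅ := by
          rw [Finset.filter_eq_empty_iff]
          intro e' he'
          rw [Nat.mem_divisors] at he'
          exact fun hh => hen (hh.trans he'.1)
        rw [hempty, Finset.sum_empty]
    rw [hE, Finset.mul_sum]
  -- put together
  have main : (N : ℂ) * ((Ball.filter fun l =>
      (∑ i ∈ range N, (i : ℤ) * (l i : ℤ)) ≡ g [ZMOD (N : ℤ)]).card : ℂ)
      = ∑ e' ∈ n.divisors, (Gz e' : ℂ) * (if (e' : ℤ) ∣ g then (e' : ℂ) else 0) := by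
    rw [← stepA, Finset.sum_congr rfl stepB, Finset.sum_comm,
      Finset.sum_congr rfl stepCDE]
    -- now : ∑ j ∈ range N, ∑ e' ∈ filter, z^{j(-g)} * Gz e'
    have hswap : ∑ j ∈ range N, ∑ e' ∈ n.divisors.filter (fun e' => (N / e') ∣ j),
        z ^ ((j : ℤ) * (-g)) * (Gz e' : ℂ)
        = ∑ e' ∈ n.divisors, ∑ j ∈ (range N).filter (fun j => (N / e') ∣ j),
            z ^ ((j : ℤ) * (-g)) * (Gz e' : ℂ) := by
      rw [Finset.sum_congr rfl (fun j _ => Finset.sum_filter _ _),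
        Finset.sum_comm]
      exact Finset.sum_congr rfl fun e' _ => (Finset.sum_filter _ _).symm
    rw [hswap]
    refine Finset.sum_congr rfl fun e' he' => ?_
    rw [Nat.mem_divisors] at he'
    have he'0 : 0 < e' := Nat.pos_of_dvd_of_pos he'.1 hn
    rw [← Finset.sum_mul, inner_j hN hz (he'.1.trans hnN) he'0 g, mul_comm]
  -- cast down to ℤ
  have cast_eq : (((N : ℤ) * ((Ball.filter fun l =>
      (∑ i ∈ range N, (i : ℤ) * (l i : ℤ)) ≡ g [ZMOD (N : ℤ)]).card : ℤ) : ℤ) : ℂ)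
      = ((∑ e' ∈ n.divisors, Gz e' * (if (e' : ℤ) ∣ g then (e' : ℤ) else 0) : ℤ) : ℂ) := by
    have hleft : (((N : ℤ) * ((Ball.filter fun l =>
        (∑ i ∈ range N, (i : ℤ) * (l i : ℤ)) ≡ g [ZMOD (N : ℤ)]).card : ℤ) : ℤ) : ℂ)
        = (N : ℂ) * ((Ball.filter fun l =>
          (∑ i ∈ range N, (i : ℤ) * (l i : ℤ)) ≡ g [ZMOD (N : ℤ)]).card : ℂ) := by
      push_cast
      rfl
    have hright : ((∑ e' ∈ n.divisors, Gz e' * (if (e' : ℤ) ∣ g then (e' : ℤ) else 0) : ℤ) : ℂ)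
        = ∑ e' ∈ n.divisors, (Gz e' : ℂ) * (if (e' : ℤ) ∣ g then (e' : ℂ) else 0) := by
      push_cast
      refine Finset.sum_congr rfl fun e' _ => ?_
      first
      | rfl
      | (congr 1
         split_ifs with h
         · push_cast; rfl
         · rfl)
    rw [hleft, hright, main]
  exact_mod_cast cast_eq



lemma two_genus (m n : ℕ) : 2 * genusZ m n = ((n : ℤ) - 1) * ((m : ℤ) * n - 2) := by
  obtain ⟨k, hk⟩ := Int.even_mul_succ_self ((n : ℤ) - 1)
  have hnum : (m : ℤ) * n * ((n : ℤ) - 1) = 2 * ((m : ℤ) * k) := by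
    linear_combination (m : ℤ) * hk
  rw [genusZ, hnum, Int.mul_ediv_cancel_left _ two_ne_zero]
  linear_combination (-1 : ℤ) * m * hk

lemma genus_even_form (m h : ℕ) : genusZ m (2 * h) = (2 * (h : ℤ) - 1) * ((m : ℤ) * h - 1) := by
  have h2 := two_genus m (2 * h)
  have h3 : (2 : ℤ) * genusZ m (2 * h) = 2 * ((2 * (h : ℤ) - 1) * ((m : ℤ) * h - 1)) := by
    rw [h2]; push_cast; ring
  linarith

lemma two_dvd_genus_iff (m h : ℕ) :
    (2 : ℤ) ∣ genusZ m (2 * h) ↔ (m % 2 = 1 ∧ h % 2 = 1) := by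
  rw [genus_even_form]
  constructor
  · intro hdvd
    have heven : Even ((2 * (h : ℤ) - 1) * ((m : ℤ) * h - 1)) := by
      obtain ⟨c, hc⟩ := hdvd
      exact ⟨c, by linarith⟩
    rcases Int.even_mul.mp heven with h1 | h1
    · obtain ⟨c, hc⟩ := h1
      omega
    · have hodd : Odd ((m : ℤ) * h) := by
        rcases Int.even_or_odd ((m : ℤ) * h) with he | ho
        · exfalso
          obtain ⟨a, ha⟩ := he
          obtain ⟨c, hc⟩ := h1
          omega
        · exact ho
      obtain ⟨hom, hoh⟩ := Int.odd_mul.mp hodd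
      obtain ⟨a, ha⟩ := hom
      obtain ⟨b, hb⟩ := hoh
      omega
  · rintro ⟨hm, hh⟩
    have hm' : Odd (m : ℤ) := by
      rw [Int.odd_coe_nat, Nat.odd_iff]; exact hm
    have hh' : Odd (h : ℤ) := by
      rw [Int.odd_coe_nat, Nat.odd_iff]; exact hh
    obtain ⟨a, ha⟩ := hm'
    obtain ⟨b, hb⟩ := hh'
    refine ⟨(4 * b + 1) * (2 * a * b + a + b), ?_⟩
    rw [ha, hb]
    ring

/-- If `e ∣ n` and `e ∣ genusZ m n` then `e ∣ 2`. -/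
lemma dvd_two_of_dvd_genus {m n e : ℕ} (hen : e ∣ n) (hg : (e : ℤ) ∣ genusZ m n) : e ∣ 2 := by
  have h1 : (e : ℤ) ∣ 2 * genusZ m n - 2 := by
    rw [two_genus]
    have h2 : ((n : ℤ) - 1) * ((m : ℤ) * n - 2) - 2 = (n : ℤ) * ((m : ℤ) * n - m - 2) := by ring
    rw [h2]
    exact Dvd.dvd.mul_right (Int.natCast_dvd_natCast.mpr hen) _
  have h3 : (e : ℤ) ∣ 2 * genusZ m n := Dvd.dvd.mul_left hg 2
  have h5 := dvd_sub h3 h1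
  rw [sub_sub_cancel] at h5
  exact_mod_cast h5

lemma choose_conv (m d : ℕ) (hm : 0 < m) (hd : 0 < d) :
    ((m + 1) * d - 1).choose d = m * (((m + 1) * d - 1).choose (m * d)) := by
  set a := (m + 1) * d - 1 with ha
  have hda : d ≤ a := by
    have : (m + 1) * d = m * d + d := by ring
    have hmd : 1 ≤ m * d := Nat.one_le_iff_ne_zero.mpr (by positivity)
    omega
  have hsym : a.choose (m * d) = a.choose (d - 1) := by
    have hsub : a - (d - 1) = m * d := by
      have : (m + 1) * d = m * d + d := by ring
      omega
    rw [← hsub]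
    exact Nat.choose_symm (by omega)
  have hrec : a.choose d * d = a.choose (d - 1) * (a - (d - 1)) := by
    have hd1 : d = (d - 1) + 1 := by omega
    rw [hd1]
    have := Nat.choose_succ_right_eq a (d - 1)
    simpa using this
  have hsub : a - (d - 1) = m * d := by
    have : (m + 1) * d = m * d + d := by ring
    omega
  rw [hsub] at hrec
  have : a.choose d * d = (m * a.choose (m * d)) * d := by
    rw [hrec, hsym]
    ring
  exact Nat.eq_of_mul_eq_mul_right hd this

/-- conversion of the `F` value. -/
lemma Fval (m n f : ℕ) (hm : 0 < m) (hn : 0 < n) (hf : f ∣ n) :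
    ((m * n / f + n / f - 1).choose (n / f) : ℤ)
      = m * ((((m + 1) * (n / f) - 1).choose (m * (n / f)) : ℕ) : ℤ) := by
  set d := n / f with hd
  have hd0 : 0 < d := Nat.div_pos (Nat.le_of_dvd hn hf) (Nat.pos_of_dvd_of_pos hf hn)
  have h1 : m * n / f = m * d := by
    rw [hd, Nat.mul_div_assoc m hf]
  have h2 : m * d + d - 1 = (m + 1) * d - 1 := by
    have : (m + 1) * d = m * d + d := by ring
    omega
  rw [h1, h2, choose_conv m d hm hd0]
  push_cast
  ring



lemma moebius_zero_of_four_dvd {k : ℕ} (h : 4 ∣ k) : moebius k = 0 := by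
  refine moebius_eq_zero_of_not_squarefree fun hsq => ?_
  obtain ⟨c, rfl⟩ := h
  have h2 := hsq 2 ⟨c, by ring⟩
  rw [Nat.isUnit_iff] at h2
  omega

lemma odd_of_dvd_odd {d n : ℕ} (hn : n % 2 = 1) (hd : d ∣ n) : d % 2 = 1 := by
  obtain ⟨k, rfl⟩ := hd
  exact Nat.odd_iff.mp (Nat.odd_mul.mp (Nat.odd_iff.mpr hn)).1

lemma coprime_two_of_odd {d : ℕ} (hd : d % 2 = 1) : Nat.Coprime 2 d :=
  (Nat.Prime.coprime_iff_not_dvd Nat.prime_two).mpr (fun ⟨c, hc⟩ => by omega)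

/-- `C((m+1)d-1, md)` as an integer. -/
def Cp (m d : ℕ) : ℤ := ((((m + 1) * d - 1).choose (m * d) : ℕ) : ℤ)

/-- The `F`-value. -/
def Fv (m n f : ℕ) : ℤ := (((m * n / f + n / f - 1).choose (n / f) : ℕ) : ℤ)

/-- The Möbius-transformed value. -/
def Gzv (m n e' : ℕ) : ℤ :=
  ∑ f ∈ n.divisors.filter (e' ∣ ·), moebius (f / e') * Fv m n f

/-- first divisor sum -/
def S1v (m n : ℕ) : ℤ := ∑ d ∈ n.divisors, (moebius (n / d) : ℤ) * Cp m d

lemma Gzv_one (m n : ℕ) (hm : 0 < m) (hn : 0 < n) : Gzv m n 1 = m * S1v m n := by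
  rw [Gzv, S1v]
  have hfilter : n.divisors.filter (1 ∣ ·) = n.divisors :=
    Finset.filter_true_of_mem fun _ _ => one_dvd _
  rw [hfilter]
  have step : ∑ f ∈ n.divisors, moebius (f / 1) * Fv m n f
      = ∑ f ∈ n.divisors, moebius f * ((m : ℤ) * Cp m (n / f)) := by
    refine Finset.sum_congr rfl fun f hf => ?_
    rw [Nat.mem_divisors] at hf
    rw [Nat.div_one, Fv, Cp, Fval m n f hm hn hf.1]
  rw [step]
  have hrev := Nat.sum_div_divisors (α := ℤ) n
    (fun f => (moebius f : ℤ) * ((m : ℤ) * Cp m (n / f)))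
  rw [← hrev, Finset.mul_sum]
  refine Finset.sum_congr rfl fun d hd => ?_
  rw [Nat.mem_divisors] at hd
  rw [Nat.div_div_self hd.1 hn.ne']
  ring

lemma Gzv_two (m n u : ℕ) (hm : 0 < m) (hn : 0 < n) (hu : n = 2 * u) (hupos : 0 < u) :
    Gzv m n 2 = m * S1v m u := by
  rw [Gzv, S1v]
  have hbij : ∑ f ∈ n.divisors.filter (2 ∣ ·), moebius (f / 2) * Fv m n f
      = ∑ s ∈ u.divisors, moebius s * Fv m n (2 * s) := by
    refine Finset.sum_nbij' (fun f => f / 2) (fun s => 2 * s) ?_ ?_ ?_ ?_ ?_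
    · intro f hf
      simp only [mem_filter, Nat.mem_divisors] at hf
      obtain ⟨⟨hdvd, -⟩, s, rfl⟩ := hf
      rw [Nat.mul_div_cancel_left _ (by norm_num : 0 < 2), Nat.mem_divisors]
      constructor
      · have h2 : 2 * s ∣ 2 * u := by rw [← hu]; exact hdvd
        exact (mul_dvd_mul_iff_left (by norm_num : (2:ℕ) ≠ 0)).mp h2
      · omega
    · intro s hs
      rw [Nat.mem_divisors] at hs
      simp only [mem_filter, Nat.mem_divisors]
      exact ⟨⟨by rw [hu]; exact mul_dvd_mul_left 2 hs.1, by omega⟩, Dvd.intro s rfl⟩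
    · intro f hf
      simp only [mem_filter, Nat.mem_divisors] at hf
      obtain ⟨-, s, rfl⟩ := hf
      rw [Nat.mul_div_cancel_left _ (by norm_num : 0 < 2)]
    · intro s _
      rw [Nat.mul_div_cancel_left _ (by norm_num : 0 < 2)]
    · intro f hf
      simp only [mem_filter, Nat.mem_divisors] at hf
      obtain ⟨-, s, rfl⟩ := hf
      rw [Nat.mul_div_cancel_left _ (by norm_num : 0 < 2)]
  rw [hbij]
  have step : ∑ s ∈ u.divisors, moebius s * Fv m n (2 * s)
      = ∑ s ∈ u.divisors, moebius s * ((m : ℤ) * Cp m (u / s)) := by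
    refine Finset.sum_congr rfl fun s hs => ?_
    rw [Nat.mem_divisors] at hs
    have h2s : 2 * s ∣ n := by rw [hu]; exact mul_dvd_mul_left 2 hs.1
    rw [Fv, Cp, Fval m n (2 * s) hm hn h2s]
    have hq : n / (2 * s) = u / s := by
      rw [hu, Nat.mul_div_mul_left _ _ (by norm_num : 0 < 2)]
    rw [hq]
  rw [step]
  have hrev := Nat.sum_div_divisors (α := ℤ) u
    (fun s => (moebius s : ℤ) * ((m : ℤ) * Cp m (u / s)))
  rw [← hrev, Finset.mul_sum]
  refine Finset.sum_congr rfl fun d hd => ?_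
  rw [Nat.mem_divisors] at hd
  rw [Nat.div_div_self hd.1 hupos.ne']
  ring


end CardOrbitsD


open CardOrbitsD in
open ArithmeticFunction in
/-- If `T` is the number of weakly decreasing tuples with `n` entries in `{0,…,mn−1}`
whose sum is congruent to `g(m,n)` mod `mn` (i.e. the number of `S_n`-orbits on
`D(m,n)`), then `n·T = ∑_{d | n} (−1)^(m(n+d)) · μ(n/d) · C((m+1)d − 1, md)`. -/
theorem card_orbits_D (m n : ℕ) (hm : 0 < m) (hn : 0 < n) :
    (n : ℤ) * Nat.card {x : Fin n → Fin (m * n) //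
        (∀ i j : Fin n, i ≤ j → x j ≤ x i) ∧
        (∑ i, ((x i : ℕ) : ℤ)) ≡ genusZ m n [ZMOD ((m * n : ℕ) : ℤ)]} =
      ∑ d ∈ n.divisors,
        (-1 : ℤ) ^ (m * (n + d)) * moebius (n / d) *
          (((m + 1) * d - 1).choose (m * d) : ℤ) := by
  classical
  have hNpos : 0 < m * n := by positivity
  -- counting
  have hcount : Nat.card {x : Fin n → Fin (m * n) //
      (∀ i j : Fin n, i ≤ j → x j ≤ x i) ∧
      (∑ i, ((x i : ℕ) : ℤ)) ≡ genusZ m n [ZMOD ((m * n : ℕ) : ℤ)]}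
      = ((((range (m * n)).finsuppAntidiag n).filter fun l =>
          (∑ i ∈ range (m * n), (i : ℤ) * (l i : ℤ)) ≡ genusZ m n [ZMOD ((m * n : ℕ) : ℤ)]).card) := by
    rw [Nat.card_eq_fintype_card, Fintype.card_subtype]
    exact bridge n (m * n) (genusZ m n)
  have hint : ((m * n : ℕ) : ℤ) * ((((range (m * n)).finsuppAntidiag n).filter fun l =>
        (∑ i ∈ range (m * n), (i : ℤ) * (l i : ℤ)) ≡ genusZ m n [ZMOD ((m * n : ℕ) : ℤ)]).card : ℤ)
      = ∑ e' ∈ n.divisors, Gzv m n e' * (if (e' : ℤ) ∣ genusZ m n then (e' : ℤ) else 0) := by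
    have h := int_step n (m * n) hn hNpos (dvd_mul_left n m) (genusZ m n)
    rw [h]
    rfl
  -- multiply the target by m
  have hmne : (m : ℤ) ≠ 0 := by positivity
  refine mul_left_cancel₀ hmne ?_
  rw [← mul_assoc, show (m : ℤ) * n = ((m * n : ℕ) : ℤ) by push_cast; ring, hcount, hint]
  clear hint hcount
  -- now prove : ∑ e' Gzv e' * ite = m * RHS
  by_cases hcond : m % 2 = 1 ∧ n % 2 = 0 ∧ (n / 2) % 2 = 1
  · -- exceptional case
    obtain ⟨hm2, hn2, hu2'⟩ := hcond
    obtain ⟨u, hn2u⟩ : ∃ u, n = 2 * u := ⟨n / 2, by omega⟩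
    have hu2 : u % 2 = 1 := by omega
    have hupos : 0 < u := by omega
    have h2div : (2 : ℕ) ∣ n := ⟨u, hn2u⟩
    have hset : ({1, 2} : Finset ℕ) ⊆ n.divisors := by
      intro e' he'
      simp only [Finset.mem_insert, Finset.mem_singleton] at he'
      rcases he' with rfl | rfl
      · exact Nat.one_mem_divisors.mpr hn.ne'
      · exact Nat.mem_divisors.mpr ⟨h2div, hn.ne'⟩
    have hzero : ∀ e' ∈ n.divisors, e' ∉ ({1, 2} : Finset ℕ) →
        Gzv m n e' * (if (e' : ℤ) ∣ genusZ m n then (e' : ℤ) else 0) = 0 := by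
      intro e' he' hnotin
      simp only [Finset.mem_insert, Finset.mem_singleton, not_or] at hnotin
      rw [Nat.mem_divisors] at he'
      have hnd : ¬ ((e' : ℤ) ∣ genusZ m n) := by
        intro hdvd
        rcases (Nat.Prime.eq_one_or_self_of_dvd Nat.prime_two e'
          (dvd_two_of_dvd_genus he'.1 hdvd)) with h | h
        · exact hnotin.1 h
        · exact hnotin.2 h
      rw [if_neg hnd, mul_zero]
    rw [← Finset.sum_subset hset hzero, Finset.sum_pair (by norm_num : (1:ℕ) ≠ 2)]
    have hite1 : (if ((1:ℕ) : ℤ) ∣ genusZ m n then ((1:ℕ) : ℤ) else 0) = 1 := by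
      rw [if_pos (by norm_num)]; norm_num
    have hite2 : (if ((2:ℕ) : ℤ) ∣ genusZ m n then ((2:ℕ) : ℤ) else 0) = 2 := by
      rw [if_pos]
      · norm_num
      · show ((2:ℕ) : ℤ) ∣ genusZ m n
        have h2 := (two_dvd_genus_iff m u).mpr ⟨hm2, hu2⟩
        rw [← hn2u] at h2
        exact_mod_cast h2
    rw [hite1, hite2, Gzv_one m n hm hn, Gzv_two m n u hm hn hn2u hupos]
    -- final identity
    have hRHS : ∑ d ∈ n.divisors, (-1 : ℤ) ^ (m * (n + d)) * moebius (n / d) *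
          (((m + 1) * d - 1).choose (m * d) : ℤ)
        = S1v m n + 2 * S1v m u := by
      have hsign : ∀ d : ℕ, ((-1 : ℤ)) ^ (m * (n + d)) = (-1 : ℤ) ^ d := by
        intro d
        rw [pow_mul, Odd.neg_one_pow (Nat.odd_iff.mpr hm2), pow_add,
          Even.neg_one_pow (Nat.even_iff.mpr hn2), one_mul]
      have step1 : ∑ d ∈ n.divisors, (-1 : ℤ) ^ (m * (n + d)) * moebius (n / d) *
            (((m + 1) * d - 1).choose (m * d) : ℤ)
          = ∑ d ∈ n.divisors, ((moebius (n / d) : ℤ) * Cp m d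
              + ((-1 : ℤ) ^ d - 1) * moebius (n / d) * Cp m d) := by
        refine Finset.sum_congr rfl fun d _ => ?_
        rw [hsign d, Cp]
        push_cast
        ring
      rw [step1, Finset.sum_add_distrib]
      have hS1 : ∑ d ∈ n.divisors, (moebius (n / d) : ℤ) * Cp m d = S1v m n := rfl
      rw [hS1]
      congr 1
      rw [← Finset.sum_filter_add_sum_filter_not n.divisors (fun d => d % 2 = 1)]
      have heven : ∑ d ∈ n.divisors.filter (fun d => ¬ (d % 2 = 1)),
          ((-1 : ℤ) ^ d - 1) * moebius (n / d) * Cp m d = 0 := by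
        refine Finset.sum_eq_zero fun d hd => ?_
        rw [Finset.mem_filter] at hd
        rw [Even.neg_one_pow (Nat.even_iff.mpr (by omega))]
        ring
      rw [heven, add_zero]
      have hsetodd : n.divisors.filter (fun d => d % 2 = 1) = u.divisors := by
        ext d
        simp only [Finset.mem_filter, Nat.mem_divisors]
        constructor
        · rintro ⟨⟨hdn, -⟩, hodd⟩
          refine ⟨?_, hupos.ne'⟩
          have h2 : d ∣ 2 * u := by rw [← hn2u]; exact hdn
          exact (coprime_two_of_odd hodd).symm.dvd_of_dvd_mul_left h2
        · rintro ⟨hdu, -⟩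
          exact ⟨⟨hdu.trans ⟨2, by omega⟩, hn.ne'⟩, odd_of_dvd_odd hu2 hdu⟩
      rw [hsetodd]
      have hfinal : ∀ d ∈ u.divisors,
          ((-1 : ℤ) ^ d - 1) * moebius (n / d) * Cp m d
            = 2 * ((moebius (u / d) : ℤ) * Cp m d) := by
        intro d hd
        rw [Nat.mem_divisors] at hd
        have hdodd : d % 2 = 1 := odd_of_dvd_odd hu2 hd.1
        have hnd : n / d = 2 * (u / d) := by
          rw [hn2u, Nat.mul_div_assoc 2 hd.1]
        have hudodd : (u / d) % 2 = 1 :=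
          odd_of_dvd_odd hu2 (Nat.div_dvd_of_dvd hd.1)
        have hmoeb : (moebius (n / d) : ℤ) = - moebius (u / d) := by
          rw [hnd, isMultiplicative_moebius.map_mul_of_coprime
            (coprime_two_of_odd hudodd), moebius_apply_prime Nat.prime_two]
          push_cast
          ring
        rw [Odd.neg_one_pow (Nat.odd_iff.mpr hdodd), hmoeb]
        push_cast
        ring
      rw [Finset.sum_congr rfl hfinal, ← Finset.mul_sum]
      rfl
    rw [hRHS]
    ring
  · -- no exceptional term
    have hzero : ∀ e' ∈ n.divisors, e' ≠ 1 →
        Gzv m n e' * (if (e' : ℤ) ∣ genusZ m n then (e' : ℤ) else 0) = 0 := by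
      intro e' he' hne1
      rw [Nat.mem_divisors] at he'
      have hnd : ¬ ((e' : ℤ) ∣ genusZ m n) := by
        intro hdvd
        rcases (Nat.Prime.eq_one_or_self_of_dvd Nat.prime_two e'
          (dvd_two_of_dvd_genus he'.1 hdvd)) with h | h
        · exact hne1 h
        · subst h
          obtain ⟨t, ht⟩ := he'.1
          have hdvd2 : (2 : ℤ) ∣ genusZ m (2 * t) := by
            rw [← ht]
            exact_mod_cast hdvd
          have hmt := (two_dvd_genus_iff m t).mp hdvd2
          exact hcond ⟨hmt.1, by omega, by omega⟩
      rw [if_neg hnd, mul_zero]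
    rw [Finset.sum_eq_single_of_mem 1 (Nat.one_mem_divisors.mpr hn.ne') hzero]
    have hite1 : (if ((1:ℕ) : ℤ) ∣ genusZ m n then ((1:ℕ) : ℤ) else 0) = 1 := by
      rw [if_pos (by norm_num)]; norm_num
    rw [hite1, Gzv_one m n hm hn, mul_one]
    congr 1
    rw [S1v]
    refine Finset.sum_congr rfl fun d hd => ?_
    rw [Nat.mem_divisors] at hd
    rcases Nat.even_or_odd (m * (n + d)) with he | ho
    · rw [Even.neg_one_pow he, one_mul, Cp]
    · obtain ⟨hmo, hndo⟩ := Nat.odd_mul.mp ho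
      have hm2 : m % 2 = 1 := Nat.odd_iff.mp hmo
      rcases Nat.even_or_odd n with hne | hno
      · have hn2 : n % 2 = 0 := Nat.even_iff.mp hne
        have hd2 : d % 2 = 1 := by
          have := Nat.odd_iff.mp hndo
          omega
        have h4 : 4 ∣ n := by
          have h42 : (n / 2) % 2 = 0 := by
            by_contra hcon
            exact hcond ⟨hm2, hn2, by omega⟩
          omega
        have h4nd : 4 ∣ n / d := by
          have hcop : Nat.Coprime 4 d := by
            have h2d := coprime_two_of_odd hd2
            have h4eq : (4 : ℕ) = 2 ^ 2 := by norm_num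
            rw [h4eq]
            exact Nat.Coprime.pow_left 2 h2d
          refine hcop.dvd_of_dvd_mul_left ?_
          have hmd : d * (n / d) = n := Nat.mul_div_cancel' hd.1
          rw [hmd]
          exact h4
        rw [moebius_zero_of_four_dvd h4nd]
        push_cast
        ring
      · exfalso
        have hd2 : d % 2 = 1 := odd_of_dvd_odd (Nat.odd_iff.mp hno) hd.1
        have h1 := Nat.odd_iff.mp hndo
        have h2 := Nat.odd_iff.mp hno
        omega
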